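/- arXiv:1406.2260 — 2 statements merged into one kernel-verified Lean document; each statement's English description precedes it below -/
import Mathlib

section
/- Let A, B be skew-Hermitian n×n complex matrices and let u, v : [0,T] → ℝ be piecewise constant controls. Denote by X^u(t,0) the associated propagator of ẋ = (A + u(t)B)x. Then for every ψ, ‖X^u(T,0)ψ − X^v(T,0)ψ‖ ≤ ‖B‖ · ‖u − v‖_{L¹([0,T])} · ‖ψ‖. -/
open scoped BigOperators

/-- The propagator associated to a piecewise constant control on a common
refinement `s = t₀ < … < t_m = T` with durations `τⱼ = tⱼ - tⱼ₋₁` and values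
`uⱼ`: the ordered product of the exponentials `exp(τⱼ (A + uⱼ B))`. -/
noncomputable def pcPropagator {n : ℕ}
    (A B : EuclideanSpace ℂ (Fin n) →L[ℂ] EuclideanSpace ℂ (Fin n))
    {m : ℕ} (τ u : Fin m → ℝ) :
    EuclideanSpace ℂ (Fin n) →L[ℂ] EuclideanSpace ℂ (Fin n) :=
  ((List.ofFn fun j => NormedSpace.exp (((τ j : ℂ)) • (A + (u j : ℂ) • B)))).prod

open NormedSpace


set_option maxHeartbeats 1000000

private lemma hasDerivAt_comp_ofReal {F : Type*} [NormedAddCommGroup F] [NormedSpace ℂ F]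
    {e : ℂ → F} {e' : F} {z : ℝ} (hf : HasDerivAt e e' z) :
    HasDerivAt (fun y : ℝ => e y) e' z := by
  simpa [Function.comp_def] using hf.scomp z Complex.ofRealCLM.hasDerivAt

private lemma exp_zero_smul_apply {n : ℕ}
    (Z : EuclideanSpace ℂ (Fin n) →L[ℂ] EuclideanSpace ℂ (Fin n)) (φ : EuclideanSpace ℂ (Fin n)) :
    NormedSpace.exp ((((0:ℝ)):ℂ) • Z) φ = φ := by
  rw [show (((0:ℝ):ℂ)) • Z = 0 by rw [Complex.ofReal_zero]; exact zero_smul ℂ Z,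
    NormedSpace.exp_zero, ContinuousLinearMap.one_apply]

/-- skew-adjoint ⇒ exp of real multiple is norm-preserving -/
private lemma skew_exp_norm {n : ℕ} {M : EuclideanSpace ℂ (Fin n) →L[ℂ] EuclideanSpace ℂ (Fin n)}
    (hM : ContinuousLinearMap.adjoint M = -M)
    (s : ℝ) (ψ : EuclideanSpace ℂ (Fin n)) : ‖exp ((s : ℂ) • M) ψ‖ = ‖ψ‖ := by
  have hmem : (s : ℂ) • M ∈ skewAdjoint (EuclideanSpace ℂ (Fin n) →L[ℂ] EuclideanSpace ℂ (Fin n)) := by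
    rw [skewAdjoint.mem_iff, star_smul, ContinuousLinearMap.star_eq_adjoint, hM]
    simp only [Complex.star_def, Complex.conj_ofReal, smul_neg, neg_smul]
  let +nondep : NormedAlgebra ℚ (EuclideanSpace ℂ (Fin n) →L[ℂ] EuclideanSpace ℂ (Fin n)) :=
    .restrictScalars ℚ ℂ _
  exact ContinuousLinearMap.norm_map_of_mem_unitary
    (exp_mem_unitary_of_mem_skewAdjoint hmem) ψ

private lemma skew_step {n : ℕ} {X Y : EuclideanSpace ℂ (Fin n) →L[ℂ] EuclideanSpace ℂ (Fin n)}
    (hX : ContinuousLinearMap.adjoint X = -X) (hY : ContinuousLinearMap.adjoint Y = -Y)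
    {τ : ℝ} (hτ : 0 ≤ τ) (ψ : EuclideanSpace ℂ (Fin n)) :
    ‖exp ((τ : ℂ) • X) ψ - exp ((τ : ℂ) • Y) ψ‖ ≤ ‖X - Y‖ * τ * ‖ψ‖ := by
  set g : ℝ → EuclideanSpace ℂ (Fin n) :=
    fun s => exp ((s : ℂ) • X) (exp (((τ : ℂ) - (s : ℂ)) • Y) ψ) with hg
  set g' : ℝ → EuclideanSpace ℂ (Fin n) :=
    fun s => exp ((s : ℂ) • X) ((X - Y) (exp (((τ : ℂ) - (s : ℂ)) • Y) ψ)) with hg'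
  have hd : ∀ s : ℝ, HasDerivAt g (g' s) s := by
    intro s
    have hE : HasDerivAt (fun z : ℂ => exp (z • X))
        (exp (((s : ℝ) : ℂ) • X) * X) ((s : ℝ) : ℂ) :=
      hasDerivAt_exp_smul_const (𝕂 := ℂ) X _
    have hsub : HasDerivAt (fun z : ℂ => (τ : ℂ) - z) (-1) ((s : ℝ) : ℂ) :=
      (hasDerivAt_id (((s : ℝ)) : ℂ)).const_sub (τ : ℂ)
    have hW0 : HasDerivAt (fun z : ℂ => exp (z • Y))
        (exp (((τ : ℂ) - (s : ℂ)) • Y) * Y) ((τ : ℂ) - (s : ℂ)) :=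
      hasDerivAt_exp_smul_const (𝕂 := ℂ) Y _
    have hWc : HasDerivAt (fun z : ℂ => exp (((τ : ℂ) - z) • Y))
        ((-1 : ℂ) • (exp (((τ : ℂ) - (s : ℂ)) • Y) * Y)) ((s : ℝ) : ℂ) :=
      hW0.scomp ((s : ℝ) : ℂ) hsub
    have hw : HasDerivAt (fun z : ℂ => exp (((τ : ℂ) - z) • Y) ψ)
        (((-1 : ℂ) • (exp (((τ : ℂ) - (s : ℂ)) • Y) * Y)) ψ) ((s : ℝ) : ℂ) := by
      simpa using hWc.clm_apply (hasDerivAt_const (((s : ℝ)) : ℂ) ψ)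
    have hG := hE.clm_apply hw
    have hGr := hasDerivAt_comp_ofReal hG
    refine hGr.congr_deriv ?_
    -- show the computed derivative equals g' s
    have hcomm : exp (((τ : ℂ) - (s : ℂ)) • Y) (Y ψ)
        = Y (exp (((τ : ℂ) - (s : ℂ)) • Y) ψ) := by
      have hc : Commute (exp (((τ : ℂ) - (s : ℂ)) • Y)) Y :=
        (((Commute.refl Y).smul_left (((τ : ℂ) - (s : ℂ)))).exp_left)
      calc exp (((τ : ℂ) - (s : ℂ)) • Y) (Y ψ)
          = (exp (((τ : ℂ) - (s : ℂ)) • Y) * Y) ψ := rfl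
        _ = (Y * exp (((τ : ℂ) - (s : ℂ)) • Y)) ψ := by rw [hc]
        _ = Y (exp (((τ : ℂ) - (s : ℂ)) • Y) ψ) := rfl
    simp only [hg', ContinuousLinearMap.sub_apply, map_sub, ContinuousLinearMap.mul_apply,
      ContinuousLinearMap.smul_apply, neg_smul, one_smul, ContinuousLinearMap.map_neg]
    rw [hcomm]
    abel
  have bound : ∀ s ∈ Set.Ico (0 : ℝ) τ, ‖g' s‖ ≤ ‖X - Y‖ * ‖ψ‖ := by
    intro s _
    have hcast : ((τ : ℂ) - (s : ℂ)) = (((τ - s : ℝ)) : ℂ) := by push_cast; ring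
    have h1 : ‖g' s‖ = ‖(X - Y) (exp (((τ : ℂ) - (s : ℂ)) • Y) ψ)‖ := skew_exp_norm hX s _
    rw [h1]
    calc ‖(X - Y) (exp (((τ : ℂ) - (s : ℂ)) • Y) ψ)‖
        ≤ ‖X - Y‖ * ‖exp (((τ : ℂ) - (s : ℂ)) • Y) ψ‖ := (X - Y).le_opNorm _
      _ = ‖X - Y‖ * ‖ψ‖ := by rw [hcast, skew_exp_norm hY (τ - s) ψ]
  have key := norm_image_sub_le_of_norm_deriv_le_segment'
    (f := g) (f' := g') (C := ‖X - Y‖ * ‖ψ‖) (a := 0) (b := τ)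
    (fun s _ => (hd s).hasDerivWithinAt) bound τ (Set.right_mem_Icc.2 hτ)
  have hgτ : g τ = exp ((τ : ℂ) • X) ψ := by
    simp only [hg, sub_self]
    rw [show ((0:ℂ)) • Y = ((((0:ℝ)):ℂ)) • Y by rw [Complex.ofReal_zero], exp_zero_smul_apply]
  have hg0 : g 0 = exp ((τ : ℂ) • Y) ψ := by
    simp only [hg, Complex.ofReal_zero, sub_zero]
    exact exp_zero_smul_apply X _
  rw [hgτ, hg0] at key
  calc ‖exp ((τ : ℂ) • X) ψ - exp ((τ : ℂ) • Y) ψ‖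
      ≤ ‖X - Y‖ * ‖ψ‖ * (τ - 0) := key
    _ = ‖X - Y‖ * τ * ‖ψ‖ := by ring

private lemma pcPropagator_norm {n : ℕ}
    (A B : EuclideanSpace ℂ (Fin n) →L[ℂ] EuclideanSpace ℂ (Fin n))
    (hA : ContinuousLinearMap.adjoint A = -A)
    (hB : ContinuousLinearMap.adjoint B = -B)
    {m : ℕ} (τ u : Fin m → ℝ) (ψ : EuclideanSpace ℂ (Fin n)) :
    ‖(((List.ofFn fun j => exp (((τ j : ℂ)) • (A + (u j : ℂ) • B)))).prod : _) ψ‖ = ‖ψ‖ := by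
  induction m with
  | zero => simp
  | succ m ih =>
    rw [List.ofFn_succ, List.prod_cons]
    have hskew : ContinuousLinearMap.adjoint (A + (u 0 : ℂ) • B) = -(A + (u 0 : ℂ) • B) := by
      rw [map_add, hA]
      have h2 : ContinuousLinearMap.adjoint ((u 0 : ℂ) • B)
          = (starRingEnd ℂ (u 0 : ℂ)) • ContinuousLinearMap.adjoint B :=
        LinearIsometryEquiv.map_smulₛₗ ContinuousLinearMap.adjoint _ _
      rw [h2, hB]
      simp only [Complex.conj_ofReal, smul_neg]
      abel
    calc ‖exp ((τ 0 : ℂ) • (A + (u 0 : ℂ) • B))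
            (((List.ofFn fun j => exp ((τ (Fin.succ j) : ℂ)
              • (A + (u (Fin.succ j) : ℂ) • B))).prod) ψ)‖
        = ‖(((List.ofFn fun j => exp ((τ (Fin.succ j) : ℂ)
              • (A + (u (Fin.succ j) : ℂ) • B))).prod) ψ)‖ := skew_exp_norm hskew _ _
      _ = ‖ψ‖ := ih (fun j => τ (Fin.succ j)) (fun j => u (Fin.succ j))

private lemma skew_comb {n : ℕ}
    {A B : EuclideanSpace ℂ (Fin n) →L[ℂ] EuclideanSpace ℂ (Fin n)}
    (hA : ContinuousLinearMap.adjoint A = -A)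
    (hB : ContinuousLinearMap.adjoint B = -B) (r : ℝ) :
    ContinuousLinearMap.adjoint (A + (r : ℂ) • B) = -(A + (r : ℂ) • B) := by
  rw [map_add, hA]
  have h2 : ContinuousLinearMap.adjoint ((r : ℂ) • B)
      = (starRingEnd ℂ (r : ℂ)) • ContinuousLinearMap.adjoint B :=
    LinearIsometryEquiv.map_smulₛₗ ContinuousLinearMap.adjoint _ _
  rw [h2, hB]
  simp only [Complex.conj_ofReal, smul_neg]
  abel

private theorem pcPropagator_L1_aux {n : ℕ}
    (A B : EuclideanSpace ℂ (Fin n) →L[ℂ] EuclideanSpace ℂ (Fin n))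
    (hA : ContinuousLinearMap.adjoint A = -A)
    (hB : ContinuousLinearMap.adjoint B = -B)
    {m : ℕ} (τ u v : Fin m → ℝ) (hτ : ∀ j, 0 ≤ τ j)
    (ψ : EuclideanSpace ℂ (Fin n)) :
    ‖(((List.ofFn fun j => exp (((τ j : ℂ)) • (A + (u j : ℂ) • B)))).prod : _) ψ
      - (((List.ofFn fun j => exp (((τ j : ℂ)) • (A + (v j : ℂ) • B)))).prod : _) ψ‖
      ≤ ‖B‖ * (∑ j, τ j * |u j - v j|) * ‖ψ‖ := by
  induction m with
  | zero =>
    simp only [List.ofFn_zero, List.prod_nil, sub_self, norm_zero, Finset.univ_eq_empty,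
      Finset.sum_empty, mul_zero, zero_mul]
    exact le_rfl
  | succ m ih =>
    rw [List.ofFn_succ, List.ofFn_succ, List.prod_cons, List.prod_cons]
    set Pu := (List.ofFn fun j => exp ((τ (Fin.succ j) : ℂ)
      • (A + (u (Fin.succ j) : ℂ) • B))).prod with hPu
    set Pv := (List.ofFn fun j => exp ((τ (Fin.succ j) : ℂ)
      • (A + (v (Fin.succ j) : ℂ) • B))).prod with hPv
    have hPvψ : ‖Pv ψ‖ = ‖ψ‖ :=
      pcPropagator_norm A B hA hB (fun j => τ (Fin.succ j)) (fun j => v (Fin.succ j)) ψ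
    have hXu := skew_comb hA hB (u 0)
    have hXv := skew_comb hA hB (v 0)
    have hnormXY : ‖(A + (u 0 : ℂ) • B) - (A + (v 0 : ℂ) • B)‖ = |u 0 - v 0| * ‖B‖ := by
      have h : (A + (u 0 : ℂ) • B) - (A + (v 0 : ℂ) • B) = ((u 0 - v 0 : ℝ) : ℂ) • B := by
        push_cast
        module
      rw [h]
      have h2 := norm_smul (((u 0 - v 0 : ℝ)) : ℂ) B
      rw [h2, Complex.norm_real, Real.norm_eq_abs]
    have step : ‖exp ((τ 0 : ℂ) • (A + (u 0 : ℂ) • B)) (Pv ψ)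
        - exp ((τ 0 : ℂ) • (A + (v 0 : ℂ) • B)) (Pv ψ)‖
        ≤ ‖B‖ * (τ 0 * |u 0 - v 0|) * ‖ψ‖ := by
      have := skew_step hXu hXv (hτ 0) (Pv ψ)
      rw [hnormXY, hPvψ] at this
      calc _ ≤ |u 0 - v 0| * ‖B‖ * τ 0 * ‖ψ‖ := this
        _ = ‖B‖ * (τ 0 * |u 0 - v 0|) * ‖ψ‖ := by ring
    have tail : ‖Pu ψ - Pv ψ‖
        ≤ ‖B‖ * (∑ j, τ (Fin.succ j) * |u (Fin.succ j) - v (Fin.succ j)|) * ‖ψ‖ :=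
      ih (fun j => τ (Fin.succ j)) (fun j => u (Fin.succ j)) (fun j => v (Fin.succ j))
        (fun j => hτ _)
    have head_iso : ‖exp ((τ 0 : ℂ) • (A + (u 0 : ℂ) • B)) (Pu ψ)
        - exp ((τ 0 : ℂ) • (A + (u 0 : ℂ) • B)) (Pv ψ)‖ = ‖Pu ψ - Pv ψ‖ := by
      rw [← map_sub]
      exact skew_exp_norm hXu (τ 0) _
    calc ‖exp ((τ 0 : ℂ) • (A + (u 0 : ℂ) • B)) (Pu ψ)
          - exp ((τ 0 : ℂ) • (A + (v 0 : ℂ) • B)) (Pv ψ)‖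
        ≤ ‖exp ((τ 0 : ℂ) • (A + (u 0 : ℂ) • B)) (Pu ψ)
            - exp ((τ 0 : ℂ) • (A + (u 0 : ℂ) • B)) (Pv ψ)‖
          + ‖exp ((τ 0 : ℂ) • (A + (u 0 : ℂ) • B)) (Pv ψ)
            - exp ((τ 0 : ℂ) • (A + (v 0 : ℂ) • B)) (Pv ψ)‖ := norm_sub_le_norm_sub_add_norm_sub _ _ _
      _ ≤ ‖Pu ψ - Pv ψ‖ + ‖B‖ * (τ 0 * |u 0 - v 0|) * ‖ψ‖ := by
          rw [head_iso]; exact add_le_add_right step _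
      _ ≤ ‖B‖ * (∑ j, τ (Fin.succ j) * |u (Fin.succ j) - v (Fin.succ j)|) * ‖ψ‖
          + ‖B‖ * (τ 0 * |u 0 - v 0|) * ‖ψ‖ := add_le_add_left tail _
      _ = ‖B‖ * (∑ j : Fin (m+1), τ j * |u j - v j|) * ‖ψ‖ := by
          rw [Fin.sum_univ_succ]; ring


/-- For skew-Hermitian `A`, `B` and two piecewise constant controls `u`, `v`
given on a common refinement with durations `τⱼ ≥ 0`, the associated propagators
satisfy `‖X^u ψ - X^v ψ‖ ≤ ‖B‖ ‖u - v‖_{L¹} ‖ψ‖`, where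
`‖u - v‖_{L¹} = ∑ⱼ τⱼ |uⱼ - vⱼ|`. -/
theorem pcPropagator_L1_continuity {n : ℕ}
    (A B : EuclideanSpace ℂ (Fin n) →L[ℂ] EuclideanSpace ℂ (Fin n))
    (hA : ContinuousLinearMap.adjoint A = -A)
    (hB : ContinuousLinearMap.adjoint B = -B)
    {m : ℕ} (τ u v : Fin m → ℝ) (hτ : ∀ j, 0 ≤ τ j)
    (ψ : EuclideanSpace ℂ (Fin n)) :
    ‖pcPropagator A B τ u ψ - pcPropagator A B τ v ψ‖
      ≤ ‖B‖ * (∑ j, τ j * |u j - v j|) * ‖ψ‖ := by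
  simpa only [pcPropagator] using pcPropagator_L1_aux A B hA hB τ u v hτ ψ
end

section
/- Let A be a skew-adjoint operator with eigenbasis (φₖ) of H and B a bounded operator on H such that B(1−A)⁻¹ is compact. Then ‖(1 − π_N) B π_N‖_{L(D(A), H)} → 0 as N → ∞, where D(A) carries the graph norm. -/
open Filter Topology

local notation "⟪" x ", " y "⟫" => @inner ℂ _ _ x y

section aux
variable {H : Type*} [NormedAddCommGroup H] [InnerProductSpace ℂ H] [CompleteSpace H]

lemma gal_norm_sub_partial_le (φ : HilbertBasis ℕ ℂ H) (x : H) (N : ℕ) :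
    ‖x - ∑ j ∈ Finset.range N, φ.repr x j • φ j‖ ≤ ‖x‖ := by
  set p := ∑ j ∈ Finset.range N, φ.repr x j • φ j with hp
  have hinner : ⟪p, x - p⟫ = 0 := by
    have h1 : ⟪p, x⟫ = ∑ j ∈ Finset.range N, (starRingEnd ℂ) (φ.repr x j) * (φ.repr x j) := by
      rw [hp, sum_inner]
      refine Finset.sum_congr rfl fun j hj => ?_
      rw [inner_smul_left, ← φ.repr_apply_apply]
    have h2 : ⟪p, p⟫ = ∑ j ∈ Finset.range N, (starRingEnd ℂ) (φ.repr x j) * (φ.repr x j) :=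
      φ.orthonormal.inner_sum _ _ _
    rw [inner_sub_right, h1, h2, sub_self]
  have hpyth := norm_add_sq_eq_norm_sq_add_norm_sq_of_inner_eq_zero p (x - p) hinner
  have hx : p + (x - p) = x := by abel
  rw [hx] at hpyth
  nlinarith [norm_nonneg p, norm_nonneg (x - p), norm_nonneg x]

lemma gal_partial_sub (φ : HilbertBasis ℕ ℂ H) (x y : H) (N : ℕ) :
    (x - ∑ j ∈ Finset.range N, φ.repr x j • φ j)
      - (y - ∑ j ∈ Finset.range N, φ.repr y j • φ j)
      = (x - y) - ∑ j ∈ Finset.range N, φ.repr (x - y) j • φ j := by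
  simp only [map_sub, lp.coeFn_sub, Pi.sub_apply, sub_smul, Finset.sum_sub_distrib]
  abel

lemma gal_tendsto_partial (φ : HilbertBasis ℕ ℂ H) (x : H) :
    Tendsto (fun N => ‖x - ∑ j ∈ Finset.range N, φ.repr x j • φ j‖) atTop (𝓝 0) := by
  have h := (φ.hasSum_repr x).tendsto_sum_nat
  have h2 := (tendsto_const_nhds (x := x) (f := atTop (α := ℕ))).sub h
  rw [sub_self] at h2
  simpa using h2.norm

lemma gal_norm_sum_sq (φ : HilbertBasis ℕ ℂ H) (a : ℕ → ℂ) (N : ℕ) :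
    ‖∑ j ∈ Finset.range N, a j • φ j‖ ^ 2 = ∑ j ∈ Finset.range N, ‖a j‖ ^ 2 := by
  rw [← inner_self_eq_norm_sq (𝕜 := ℂ), φ.orthonormal.inner_sum a a (Finset.range N), map_sum]
  exact Finset.sum_congr rfl fun j _ => by rw [RCLike.conj_mul, ← RCLike.ofReal_pow, RCLike.ofReal_re]

end aux

/-- Let `A` be skew-adjoint with Hilbert basis `(φⱼ)` of eigenvectors,
`A φⱼ = i λⱼ φⱼ`, let `R = (1 - A)⁻¹` (the bounded operator with
`R φⱼ = (1 - i λⱼ)⁻¹ φⱼ`), and let `B` be a bounded operator such that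
`B (1-A)⁻¹` is compact.  Denoting by `π_N` the orthogonal projection on the span
of the first `N` basis vectors, the operator norm of `(1 - π_N) B π_N` from
`D(A)` (with the graph norm `‖ψ‖ + ‖Aψ‖`, expressed through the coefficients
`⟪φⱼ, ψ⟫`) to `H` tends to `0` as `N → ∞`. -/
theorem galerkin_offdiagonal_vanishing
    {H : Type*} [NormedAddCommGroup H] [InnerProductSpace ℂ H] [CompleteSpace H]
    (φ : HilbertBasis ℕ ℂ H) (lam : ℕ → ℝ)
    (R B : H →L[ℂ] H)
    (hR : ∀ j, R (φ j) = ((1 : ℂ) - Complex.I * lam j)⁻¹ • φ j)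
    (hcomp : IsCompactOperator (B.comp R)) :
    Tendsto (fun N : ℕ =>
      sSup {r : ℝ | ∃ ψ : H,
        Summable (fun j => |lam j| ^ 2 * ‖φ.repr ψ j‖ ^ 2) ∧
        ‖ψ‖ + Real.sqrt (∑' j : ℕ, |lam j| ^ 2 * ‖φ.repr ψ j‖ ^ 2) ≤ 1 ∧
        r = ‖B (∑ j ∈ Finset.range N, φ.repr ψ j • φ j)
              - ∑ j ∈ Finset.range N,
                  φ.repr (B (∑ i ∈ Finset.range N, φ.repr ψ i • φ i)) j • φ j‖})
      atTop (𝓝 0) := by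
  classical
  set K := B.comp R with hKdef
  have hcomp' : IsCompactOperator (K.toLinearMap) := hcomp
  obtain ⟨C, hCc, hCsub⟩ := hcomp'.image_closedBall_subset_compact 1
  rw [Metric.tendsto_atTop]
  intro ε hε
  obtain ⟨t, htC, htcover⟩ := hCc.elim_nhds_subcover (fun c => Metric.ball c (ε / 3))
    (fun c _ => Metric.ball_mem_nhds c (by positivity))
  have hev : ∀ᶠ N in atTop, ∀ c ∈ t, ‖c - ∑ j ∈ Finset.range N, φ.repr c j • φ j‖ < ε / 3 := by
    rw [eventually_all_finset]
    intro c _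
    exact (gal_tendsto_partial φ c).eventually_lt_const (by positivity)
  obtain ⟨N₀, hN₀⟩ := eventually_atTop.1 hev
  refine ⟨N₀, fun N hN => ?_⟩
  have h0 : ∀ j, ((1 : ℂ) - Complex.I * lam j) ≠ 0 := by
    intro j h
    have := congrArg Complex.re h
    simp [Complex.sub_re, Complex.mul_re] at this
  -- bound on every element of the set
  have key : ∀ r ∈ {r : ℝ | ∃ ψ : H,
        Summable (fun j => |lam j| ^ 2 * ‖φ.repr ψ j‖ ^ 2) ∧
        ‖ψ‖ + Real.sqrt (∑' j : ℕ, |lam j| ^ 2 * ‖φ.repr ψ j‖ ^ 2) ≤ 1 ∧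
        r = ‖B (∑ j ∈ Finset.range N, φ.repr ψ j • φ j)
              - ∑ j ∈ Finset.range N,
                  φ.repr (B (∑ i ∈ Finset.range N, φ.repr ψ i • φ i)) j • φ j‖},
      r ≤ 2 * ε / 3 := by
    rintro r ⟨ψ, hsum, hnorm, hr⟩
    set a : ℕ → ℂ := fun j => ((1 : ℂ) - Complex.I * lam j) * φ.repr ψ j with ha
    set w : H := ∑ j ∈ Finset.range N, a j • φ j with hw
    have hRw : R w = ∑ j ∈ Finset.range N, φ.repr ψ j • φ j := by
      rw [hw, map_sum]
      refine Finset.sum_congr rfl fun j hj => ?_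
      rw [map_smul, hR j, smul_smul, ha]
      congr 1
      field_simp
      rw [mul_comm, mul_div_assoc, div_self (h0 j), mul_one]
    -- norm of w
    have hT0 : (0:ℝ) ≤ ∑' j : ℕ, |lam j| ^ 2 * ‖φ.repr ψ j‖ ^ 2 :=
      tsum_nonneg fun j => by positivity
    have hw2 : ‖w‖ ^ 2 = ∑ j ∈ Finset.range N, (1 + |lam j| ^ 2) * ‖φ.repr ψ j‖ ^ 2 := by
      rw [hw, gal_norm_sum_sq]
      refine Finset.sum_congr rfl fun j _ => ?_
      rw [ha]
      have : ‖((1 : ℂ) - Complex.I * lam j)‖ ^ 2 = 1 + |lam j| ^ 2 := by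
        rw [Complex.sq_norm]
        simp [Complex.normSq_apply, Complex.sub_re, Complex.sub_im, Complex.mul_re,
          Complex.mul_im, sq_abs]
        ring
      rw [norm_mul, mul_pow, this]
    have hbessel : ∑ j ∈ Finset.range N, ‖φ.repr ψ j‖ ^ 2 ≤ ‖ψ‖ ^ 2 := by
      have := φ.orthonormal.sum_inner_products_le (s := Finset.range N) ψ
      simpa [← φ.repr_apply_apply] using this
    have hlam : ∑ j ∈ Finset.range N, |lam j| ^ 2 * ‖φ.repr ψ j‖ ^ 2
        ≤ ∑' j : ℕ, |lam j| ^ 2 * ‖φ.repr ψ j‖ ^ 2 :=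
      Summable.sum_le_tsum _ (fun j _ => by positivity) hsum
    have hw1 : ‖w‖ ≤ 1 := by
      have h1 : ‖w‖ ^ 2 ≤ ‖ψ‖ ^ 2 + ∑' j : ℕ, |lam j| ^ 2 * ‖φ.repr ψ j‖ ^ 2 := by
        rw [hw2]
        have : ∑ j ∈ Finset.range N, (1 + |lam j| ^ 2) * ‖φ.repr ψ j‖ ^ 2
            = ∑ j ∈ Finset.range N, ‖φ.repr ψ j‖ ^ 2
              + ∑ j ∈ Finset.range N, |lam j| ^ 2 * ‖φ.repr ψ j‖ ^ 2 := by
          rw [← Finset.sum_add_distrib]; exact Finset.sum_congr rfl fun j _ => by ring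
        rw [this]
        exact add_le_add hbessel hlam
      have hs := Real.sq_sqrt hT0
      nlinarith [norm_nonneg w, norm_nonneg ψ,
        Real.sqrt_nonneg (∑' j : ℕ, |lam j| ^ 2 * ‖φ.repr ψ j‖ ^ 2)]
    -- K w lands in C
    have hKwC : K w ∈ C := hCsub ⟨w, by simpa [Metric.mem_closedBall] using hw1, rfl⟩
    obtain ⟨c, hct, hcball⟩ := Set.mem_iUnion₂.1 (htcover hKwC)
    have hBw : B (∑ j ∈ Finset.range N, φ.repr ψ j • φ j) = K w := by
      rw [← hRw]; rfl
    rw [hr, hBw]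
    have hdecomp := gal_partial_sub φ (K w) c N
    calc ‖K w - ∑ j ∈ Finset.range N, φ.repr (K w) j • φ j‖
        = ‖((K w - c) - ∑ j ∈ Finset.range N, φ.repr (K w - c) j • φ j)
            + (c - ∑ j ∈ Finset.range N, φ.repr c j • φ j)‖ := by
          rw [← hdecomp]; congr 1; abel
      _ ≤ ‖(K w - c) - ∑ j ∈ Finset.range N, φ.repr (K w - c) j • φ j‖
            + ‖c - ∑ j ∈ Finset.range N, φ.repr c j • φ j‖ := norm_add_le _ _
      _ ≤ ‖K w - c‖ + ‖c - ∑ j ∈ Finset.range N, φ.repr c j • φ j‖ :=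
          add_le_add_left (gal_norm_sub_partial_le φ _ N) _
      _ ≤ ε / 3 + ε / 3 := by
          refine add_le_add ?_ (le_of_lt (hN₀ N hN c hct))
          have : dist (K w) c < ε / 3 := hcball
          rw [dist_eq_norm] at this
          exact this.le
      _ = 2 * ε / 3 := by ring
  have hnonneg : 0 ≤ sSup {r : ℝ | ∃ ψ : H,
        Summable (fun j => |lam j| ^ 2 * ‖φ.repr ψ j‖ ^ 2) ∧
        ‖ψ‖ + Real.sqrt (∑' j : ℕ, |lam j| ^ 2 * ‖φ.repr ψ j‖ ^ 2) ≤ 1 ∧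
        r = ‖B (∑ j ∈ Finset.range N, φ.repr ψ j • φ j)
              - ∑ j ∈ Finset.range N,
                  φ.repr (B (∑ i ∈ Finset.range N, φ.repr ψ i • φ i)) j • φ j‖} :=
    Real.sSup_nonneg (by rintro x ⟨ψ, -, -, rfl⟩; positivity)
  have hle := Real.sSup_le key (by positivity)
  rw [Real.dist_eq, sub_zero, abs_of_nonneg hnonneg]
  calc sSup _ ≤ 2 * ε / 3 := hle
    _ < ε := by linarith
end
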